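/- Let A > 0, R > 0 and x ∈ [-R, R]. The 2×2 matrix function Ψ_2(x,k) = ((1, (A/(2ik)) e^{2ik(R-x)}), (0, 1)) solves the Volterra integral equation Ψ_2(x,k) = N_+(k) - ∫_x^R G_+(x,y,k) ((0, -A),(0,0)) Ψ_2(y,k) e^{ik(x-y)σ3} dy, where N_+(k) = ((1, A/(2ik)),(0,1)) and G_+(x,y,k) = ((e^{-ik(x-y)}, (A/(2ik))(e^{ik(x-y)} - e^{-ik(x-y)})), (0, e^{ik(x-y)})). -/
import Mathlib


open Complex Matrix MeasureTheory

attribute [local instance] Matrix.frobeniusNormedAddCommGroup Matrix.frobeniusNormedSpace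

/-- `N₊(k) = ((1, A/(2ik)), (0, 1))`. -/
noncomputable def Nplus (A : ℝ) (k : ℝ) : Matrix (Fin 2) (Fin 2) ℂ :=
  !![1, (A : ℂ) / (2 * Complex.I * (k : ℂ)); 0, 1]

/-- The Cauchy matrix `G₊(x,y,k)`. -/
noncomputable def Gplus (A : ℝ) (k x y : ℝ) : Matrix (Fin 2) (Fin 2) ℂ :=
  !![Complex.exp (-Complex.I * (k : ℂ) * ((x : ℂ) - (y : ℂ))),
      (A : ℂ) / (2 * Complex.I * (k : ℂ)) *
        (Complex.exp (Complex.I * (k : ℂ) * ((x : ℂ) - (y : ℂ))) -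
          Complex.exp (-Complex.I * (k : ℂ) * ((x : ℂ) - (y : ℂ))));
     0, Complex.exp (Complex.I * (k : ℂ) * ((x : ℂ) - (y : ℂ)))]

/-- The constant matrix `((0, -A), (0, 0))`. -/
noncomputable def Bmat (A : ℝ) : Matrix (Fin 2) (Fin 2) ℂ :=
  !![0, -(A : ℂ); 0, 0]

/-- `e^{ik t σ₃} = diag(e^{ikt}, e^{-ikt})`. -/
noncomputable def Emat (k t : ℝ) : Matrix (Fin 2) (Fin 2) ℂ :=
  !![Complex.exp (Complex.I * (k : ℂ) * (t : ℂ)), 0;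
     0, Complex.exp (-Complex.I * (k : ℂ) * (t : ℂ))]

/-- The explicit Jost matrix `Ψ₂(x,k) = ((1, (A/(2ik)) e^{2ik(R-x)}), (0, 1))`. -/
noncomputable def Psi2 (A R : ℝ) (k x : ℝ) : Matrix (Fin 2) (Fin 2) ℂ :=
  !![1, (A : ℂ) / (2 * Complex.I * (k : ℂ)) *
        Complex.exp (2 * Complex.I * (k : ℂ) * ((R : ℂ) - (x : ℂ))); 0, 1]

/-- For `x ∈ [-R, R]`, the explicit matrix `Ψ₂(x,k)` solves the Volterra integral
equation `Ψ₂(x,k) = N₊(k) - ∫_x^R G₊(x,y,k) ((0,-A),(0,0)) Ψ₂(y,k) e^{ik(x-y)σ₃} dy`. -/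
theorem psi2_solves_volterra (A R : ℝ) (hA : 0 < A) (hR : 0 < R)
    (k : ℝ) (hk : k ≠ 0) (x : ℝ) (hx : x ∈ Set.Icc (-R) R) :
    Psi2 A R k x =
      Nplus A k -
        ∫ y in x..R, Gplus A k x y * Bmat A * Psi2 A R k y * Emat k (x - y) := by
  have hc : (2 : ℂ) * Complex.I * k ≠ 0 := by
    simp [Complex.I_ne_zero, Complex.ofReal_eq_zero, hk]
  have hfun : ∀ y : ℝ, Gplus A k x y * Bmat A * Psi2 A R k y * Emat k (x - y)
      = (Complex.exp ((2 * Complex.I * k) * y) * Complex.exp (-(2 * Complex.I * k) * x)) •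
        !![0, -(A : ℂ); 0, 0] := by
    intro y
    ext i j
    fin_cases i <;> fin_cases j <;>
      simp [Gplus, Bmat, Psi2, Emat, Matrix.mul_apply, Fin.sum_univ_succ,
        ← Complex.exp_add, Complex.ofReal_sub] <;>
      (try (ring_nf; rw [sq, ← Complex.exp_add]; ring_nf))
  rw [intervalIntegral.integral_congr (g := fun y =>
      (Complex.exp ((2 * Complex.I * k) * y) * Complex.exp (-(2 * Complex.I * k) * x)) •
        !![0, -(A : ℂ); 0, 0]) (fun y _ => hfun y)]
  rw [intervalIntegral.integral_smul_const, intervalIntegral.integral_mul_const,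
    integral_exp_mul_complex hc]
  ext i j
  fin_cases i <;> fin_cases j <;>
    simp [Psi2, Nplus, Complex.ofReal_sub, ← Complex.exp_add]
  field_simp
  rw [sub_mul, ← Complex.exp_add, ← Complex.exp_add]
  ring_nf
  simp [Complex.exp_zero]
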